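/- Sivaramakrishnan's identity: Let m, n, t be positive integers with m∣t and n∣t, and let n₁ be the largest divisor d of n with gcd(d,m)=1. Then ∑_{a=1, gcd(a,m)=1}^{t} gcd(a-1,n) = (t·φ(m)·τ(n)/m) · ∏_{p^ν ∥ n₁} (1 - ν/((ν+1)p)), where the product is over prime powers exactly dividing n₁. -/

import Mathlib

open Finset

-- cast bijection range m → ZMod m
theorem castbij (m : ℕ) [NeZero m] (q : ZMod m → Prop) [DecidablePred q] :
    ((Finset.range m).filter (fun k : ℕ => q (k : ZMod m))).card
      = ((Finset.univ : Finset (ZMod m)).filter q).card := by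
  refine Finset.card_nbij (fun k : ℕ => (k : ZMod m)) ?_ ?_ ?_
  · intro k hk
    simp only [Finset.mem_coe, Finset.mem_filter, Finset.mem_range] at hk ⊢
    exact ⟨Finset.mem_univ _, hk.2⟩
  · intro k₁ h₁ k₂ h₂ hc
    simp only [Finset.coe_filter, Set.mem_setOf_eq, Finset.mem_range] at h₁ h₂
    have := congrArg ZMod.val hc
    rwa [ZMod.val_cast_of_lt h₁.1, ZMod.val_cast_of_lt h₂.1] at this
  · intro x hx
    simp only [Finset.coe_filter, Set.mem_setOf_eq, Finset.mem_univ, true_and] at hx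
    refine ⟨x.val, ?_, ?_⟩
    · simp only [Finset.coe_filter, Set.mem_setOf_eq, Finset.mem_range]
      constructor
      · exact ZMod.val_lt x
      · rwa [ZMod.natCast_val, ZMod.cast_id]
    · show ((x.val : ℕ) : ZMod m) = x
      rw [ZMod.natCast_val, ZMod.cast_id]

-- units card
theorem unitscard (m : ℕ) [NeZero m] :
    ((Finset.univ : Finset (ZMod m)).filter IsUnit).card = m.totient := by
  rw [Nat.totient_eq_card_coprime]
  rw [← castbij m IsUnit]
  apply Finset.card_bij' (fun a _ => a) (fun a _ => a) <;> intro a ha <;>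
    simp only [Finset.mem_filter, Finset.mem_range] at * <;>
    refine ⟨ha.1, ?_⟩
  · exact Nat.coprime_comm.mp ((ZMod.isUnit_iff_coprime a m).mp ha.2)
  · exact (ZMod.isUnit_iff_coprime a m).mpr (Nat.coprime_comm.mp ha.2)

-- equiv filter card
theorem equivcard (m : ℕ) [NeZero m] (e : ZMod m ≃ ZMod m) (p : ZMod m → Prop) [DecidablePred p] :
    ((Finset.univ : Finset (ZMod m)).filter (fun x => p (e x))).card
      = ((Finset.univ : Finset (ZMod m)).filter p).card := by
  refine Finset.card_nbij (fun x => e x) ?_ ?_ ?_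
  · intro x hx
    simp only [Finset.mem_coe, Finset.mem_filter] at hx ⊢
    exact ⟨Finset.mem_univ _, hx.2⟩
  · intro a _ b _ hab; exact e.injective hab
  · intro x hx
    simp only [Finset.coe_filter, Set.mem_setOf_eq] at hx ⊢
    exact ⟨e.symm x, ⟨Finset.mem_univ _, by simp [hx.2]⟩, by simp⟩

-- one period count
theorem period_count (d m₂ : ℕ) (hd : 0 < d) (hm : 0 < m₂) (hco : Nat.Coprime d m₂) :
    ((Finset.Ico 0 (d*m₂)).filter (fun b => d ∣ b ∧ Nat.gcd (b+1) m₂ = 1)).card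
      = m₂.totient := by
  have : NeZero m₂ := ⟨hm.ne'⟩
  have step1 : ((Finset.Ico 0 (d*m₂)).filter (fun b => d ∣ b ∧ Nat.gcd (b+1) m₂ = 1)).card
      = ((Finset.range m₂).filter (fun k : ℕ => Nat.gcd (d*k+1) m₂ = 1)).card := by
    refine Finset.card_nbij' (fun b => b / d) (fun k => d * k) ?_ ?_ ?_ ?_
    · intro b hb
      simp only [Finset.mem_coe, Finset.mem_filter, Finset.mem_Ico, Finset.mem_range] at hb ⊢
      obtain ⟨⟨_, hlt⟩, hdvd, hgcd⟩ := hb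
      refine ⟨Nat.div_lt_of_lt_mul hlt, ?_⟩
      rwa [Nat.mul_div_cancel' hdvd]
    · intro k hk
      simp only [Finset.mem_coe, Finset.mem_filter, Finset.mem_Ico, Finset.mem_range] at hk ⊢
      exact ⟨⟨Nat.zero_le _, (Nat.mul_lt_mul_left hd).mpr hk.1⟩, Dvd.intro k rfl, hk.2⟩
    · intro b hb
      simp only [Finset.mem_coe, Finset.mem_filter, Finset.mem_Ico] at hb
      exact Nat.mul_div_cancel' hb.2.1
    · intro k hk
      exact Nat.mul_div_cancel_left k hd
  have u : (ZMod m₂)ˣ := ZMod.unitOfCoprime d hco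
  have step2 : ((Finset.range m₂).filter (fun k : ℕ => Nat.gcd (d*k+1) m₂ = 1)).card
      = m₂.totient := by
    set u : (ZMod m₂)ˣ := ZMod.unitOfCoprime d hco with hu
    set e : ZMod m₂ ≃ ZMod m₂ := (Units.mulLeft u).trans (Equiv.addRight (1 : ZMod m₂)) with he
    have hfc : ((Finset.range m₂).filter (fun k : ℕ => Nat.gcd (d*k+1) m₂ = 1))
        = ((Finset.range m₂).filter (fun k : ℕ => IsUnit (e (k : ZMod m₂)))) := by
      apply Finset.filter_congr
      intro k _
      have hcast : ((d*k+1 : ℕ) : ZMod m₂) = e (k : ZMod m₂) := by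
        simp only [he, Equiv.trans_apply, Units.mulLeft_apply, Equiv.coe_addRight, hu,
          ZMod.coe_unitOfCoprime]
        push_cast
        ring
      rw [← Nat.coprime_iff_gcd_eq_one, ← ZMod.isUnit_iff_coprime, hcast]
    rw [hfc, castbij m₂ (fun x => IsUnit (e x)), equivcard m₂ e IsUnit, unitscard]
  rw [step1, step2]

theorem block_count (p : ℕ → Prop) [DecidablePred p] (P k : ℕ) (pp : Function.Periodic p P) :
    ((Finset.Ico 0 (k*P)).filter p).card = k * ((Finset.Ico 0 P).filter p).card := by
  induction k with
  | zero => simp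
  | succ k ih =>
    have h1 : Finset.Ico 0 ((k+1)*P) = Finset.Ico 0 (k*P) ∪ Finset.Ico (k*P) (k*P + P) := by
      rw [Finset.Ico_union_Ico_eq_Ico (Nat.zero_le _) (Nat.le_add_right _ _)]
      ring_nf
    have h2 : Disjoint (Finset.Ico 0 (k*P)) (Finset.Ico (k*P) (k*P + P)) :=
      Finset.Ico_disjoint_Ico_consecutive _ _ _
    rw [h1, Finset.filter_union, Finset.card_union_of_disjoint (Finset.disjoint_filter_filter h2),
      ih, Nat.filter_Ico_card_eq_of_periodic _ _ _ pp]
    have h3 : ((Finset.Ico 0 P).filter p).card = P.count p := by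
      have := Nat.filter_Ico_card_eq_of_periodic 0 P p pp
      simpa using this
    rw [h3]; ring

theorem key_count (t d m₁ m₂ : ℕ) (hd : 0 < d) (hm₂ : 0 < m₂)
    (hco : Nat.Coprime d m₂) (hprim : ∀ p, p.Prime → p ∣ m₁ → p ∣ d) (hdvd : d * m₂ ∣ t) :
    ((Finset.Icc 1 t).filter (fun a => Nat.gcd a (m₁*m₂) = 1 ∧ d ∣ (a-1))).card
      = (t/(d*m₂)) * m₂.totient := by
  -- shift to Ico 0 t
  have step1 : ((Finset.Icc 1 t).filter (fun a => Nat.gcd a (m₁*m₂) = 1 ∧ d ∣ (a-1))).card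
      = ((Finset.Ico 0 t).filter (fun b => d ∣ b ∧ Nat.gcd (b+1) m₂ = 1)).card := by
    refine Finset.card_nbij' (fun a => a - 1) (fun b => b + 1) ?_ ?_ ?_ ?_
    · intro a ha
      simp only [Finset.mem_coe, Finset.mem_filter, Finset.mem_Icc, Finset.mem_Ico] at ha ⊢
      obtain ⟨⟨h1, h2⟩, hg, hdv⟩ := ha
      have ha1 : a - 1 + 1 = a := Nat.sub_add_cancel h1
      refine ⟨⟨Nat.zero_le _, by omega⟩, hdv, ?_⟩
      rw [ha1]
      exact Nat.Coprime.coprime_dvd_right (dvd_mul_left m₂ m₁) hg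
    · intro b hb
      simp only [Finset.mem_coe, Finset.mem_filter, Finset.mem_Icc, Finset.mem_Ico, Nat.add_sub_cancel] at hb ⊢
      obtain ⟨⟨_, h2⟩, hdv, hg⟩ := hb
      refine ⟨⟨by omega, by omega⟩, ?_, hdv⟩
      have hbd : Nat.Coprime (b+1) d := Nat.Coprime.coprime_dvd_right hdv (by
        simpa using Nat.coprime_succ_self_left (n := b))
      have hbm1 : Nat.Coprime (b+1) m₁ := by
        apply Nat.coprime_of_dvd
        intro k hk hk1 hk2
        have hone : k ∣ 1 := hbd ▸ Nat.dvd_gcd hk1 (hprim k hk hk2)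
        exact absurd (Nat.dvd_one.mp hone) hk.ne_one
      exact Nat.Coprime.mul_right hbm1 hg
    · intro a ha
      simp only [Finset.mem_coe, Finset.mem_filter, Finset.mem_Icc] at ha
      show a - 1 + 1 = a
      omega
    · intro b _
      simp
  rw [step1]
  -- predicate is periodic with period d*m₂
  have pp : Function.Periodic (fun b => d ∣ b ∧ Nat.gcd (b+1) m₂ = 1) (d*m₂) := by
    intro b
    have hdm : d ∣ d * m₂ := Dvd.intro m₂ rfl
    have h1 : (d ∣ b + d*m₂) ↔ d ∣ b :=
      ⟨fun h => by simpa using Nat.dvd_sub h hdm, fun h => Nat.dvd_add h hdm⟩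
    have h2 : Nat.gcd (b + d*m₂ + 1) m₂ = Nat.gcd (b+1) m₂ := by
      have : b + d*m₂ + 1 = (b+1) + d*m₂ := by ring
      rw [this, Nat.gcd_add_mul_right_left m₂ (b+1) d]
    simp only [h1, h2]
  obtain ⟨k, hk⟩ := hdvd
  have ht' : t = k * (d*m₂) := by rw [hk]; ring
  rw [ht', block_count _ _ _ pp, period_count d m₂ hd hm₂ hco,
    Nat.mul_div_cancel _ (by positivity)]

theorem sum_div_reindex {M : Type*} [AddCommMonoid M] {x y : ℕ} (hx : x ≠ 0) (hy : y ≠ 0)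
    (h : Nat.Coprime x y) (f : ℕ → M) :
    ∑ d ∈ (x*y).divisors, f d = ∑ a ∈ x.divisors, ∑ b ∈ y.divisors, f (a*b) := by
  rw [← Finset.sum_product']
  refine Finset.sum_nbij' (fun d => (Nat.gcd d x, Nat.gcd d y)) (fun p => p.1 * p.2) ?_ ?_ ?_ ?_ ?_
  · intro d hd
    simp only [Finset.mem_product, Nat.mem_divisors]
    exact ⟨⟨Nat.gcd_dvd_right _ _, hx⟩, ⟨Nat.gcd_dvd_right _ _, hy⟩⟩
  · rintro ⟨a, b⟩ hab
    simp only [Finset.mem_product, Nat.mem_divisors] at hab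
    exact Nat.mem_divisors.mpr ⟨mul_dvd_mul hab.1.1 hab.2.1, mul_ne_zero hx hy⟩
  · intro d hd
    rw [Nat.mem_divisors] at hd
    exact (Nat.Coprime.gcd_mul d h).symm.trans (Nat.gcd_eq_left hd.1)
  · rintro ⟨a, b⟩ hab
    simp only [Finset.mem_product, Nat.mem_divisors] at hab
    have h1 : Nat.gcd (a*b) x = a := by
      rw [Nat.Coprime.gcd_mul_right_cancel a ((Nat.coprime_comm.mp h).coprime_dvd_left hab.2.1)]
      exact Nat.gcd_eq_left hab.1.1
    have h2 : Nat.gcd (a*b) y = b := by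
      rw [Nat.Coprime.gcd_mul_left_cancel b (h.coprime_dvd_left hab.1.1)]
      exact Nat.gcd_eq_left hab.2.1
    simp [h1, h2]
  · intro d hd
    rw [Nat.mem_divisors] at hd
    rw [(Nat.Coprime.gcd_mul d h).symm.trans (Nat.gcd_eq_left hd.1)]

theorem sum_totient_div : ∀ k : ℕ, 0 < k →
    ∑ d ∈ k.divisors, (d.totient : ℚ)/d
      = ∏ p ∈ k.primeFactors, (1 + (k.factorization p : ℚ) * (1 - (p:ℚ)⁻¹)) := by
  intro k
  induction k using Nat.recOnPosPrimePosCoprime with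
  | prime_pow p n hp hn =>
    intro _
    have hp' : p.Prime := hp
    have hp0 : (p : ℚ) ≠ 0 := Nat.cast_ne_zero.mpr hp'.pos.ne'
    rw [Nat.sum_divisors_prime_pow hp', Finset.sum_range_succ']
    have hterm : ∀ i ∈ Finset.range n, ((p^(i+1) : ℕ).totient : ℚ)/((p : ℕ)^(i+1) : ℕ)
        = 1 - (p:ℚ)⁻¹ := by
      intro i _
      rw [Nat.totient_prime_pow hp' (Nat.succ_pos i)]
      have h1 : ((p : ℚ))^(i+1) ≠ 0 := pow_ne_zero _ hp0
      push_cast [Nat.succ_sub_one, hp'.one_le]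
      field_simp
      ring
    rw [Finset.sum_congr rfl hterm, Finset.sum_const, Finset.card_range]
    have hpf : (p^n).primeFactors = {p} := by
      rw [Nat.primeFactors_pow _ hn.ne', Nat.Prime.primeFactors hp']
    rw [hpf, Finset.prod_singleton, hp'.factorization_pow, Finsupp.single_eq_same]
    simp [pow_zero, Nat.totient_one]
    ring
  | zero => intro h; exact absurd h (lt_irrefl 0)
  | one => intro _; simp
  | coprime a b ha hb hab iha ihb =>
    intro _
    have ha0 : a ≠ 0 := by omega
    have hb0 : b ≠ 0 := by omega
    rw [sum_div_reindex ha0 hb0 hab]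
    have hsplit : ∀ d₁ ∈ a.divisors, ∀ d₂ ∈ b.divisors,
        (((d₁*d₂ : ℕ).totient : ℚ))/((d₁*d₂ : ℕ) : ℚ)
          = ((d₁.totient : ℚ)/d₁) * ((d₂.totient : ℚ)/d₂) := by
      intro d₁ h₁ d₂ h₂
      rw [Nat.mem_divisors] at h₁ h₂
      rw [Nat.totient_mul ((hab.coprime_dvd_left h₁.1).coprime_dvd_right h₂.1)]
      push_cast
      ring
    calc ∑ d₁ ∈ a.divisors, ∑ d₂ ∈ b.divisors, (((d₁*d₂:ℕ).totient : ℚ))/((d₁*d₂:ℕ))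
        = ∑ d₁ ∈ a.divisors, ∑ d₂ ∈ b.divisors, ((d₁.totient : ℚ)/d₁) * ((d₂.totient : ℚ)/d₂) := by
          refine Finset.sum_congr rfl fun d₁ h₁ => Finset.sum_congr rfl fun d₂ h₂ => ?_
          exact hsplit d₁ h₁ d₂ h₂
      _ = (∑ d₁ ∈ a.divisors, (d₁.totient : ℚ)/d₁) * (∑ d₂ ∈ b.divisors, (d₂.totient : ℚ)/d₂) := by
          rw [Finset.sum_mul_sum]
      _ = _ := by
          rw [iha (Nat.pos_of_ne_zero ha0), ihb (Nat.pos_of_ne_zero hb0),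
            Nat.Coprime.primeFactors_mul hab,
            Finset.prod_union hab.disjoint_primeFactors]
          congr 1
          · refine Finset.prod_congr rfl fun p hp => ?_
            have hz : b.factorization p = 0 := by
              apply Nat.factorization_eq_zero_of_not_dvd
              intro hpb
              have hone : p ∣ 1 := hab ▸ Nat.dvd_gcd (Nat.dvd_of_mem_primeFactors hp) hpb
              exact absurd (Nat.dvd_one.mp hone) (Nat.prime_of_mem_primeFactors hp).ne_one
            rw [Nat.factorization_mul ha0 hb0, Finsupp.add_apply, hz, add_zero]
          · refine Finset.prod_congr rfl fun p hp => ?_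
            have hz : a.factorization p = 0 := by
              apply Nat.factorization_eq_zero_of_not_dvd
              intro hpb
              have hone : p ∣ 1 := hab ▸ Nat.dvd_gcd hpb (Nat.dvd_of_mem_primeFactors hp)
              exact absurd (Nat.dvd_one.mp hone) (Nat.prime_of_mem_primeFactors hp).ne_one
            rw [Nat.factorization_mul ha0 hb0, Finsupp.add_apply, hz, zero_add]
-- gcd sum lemma
theorem gcd_sum (n b : ℕ) (hn : n ≠ 0) :
    ∑ d ∈ n.divisors with d ∣ b, d.totient = Nat.gcd b n := by
  have h : n.divisors.filter (· ∣ b) = (Nat.gcd b n).divisors := by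
    ext d
    simp only [Nat.mem_divisors, Finset.mem_filter]
    constructor
    · rintro ⟨⟨h1, _⟩, h2⟩
      exact ⟨Nat.dvd_gcd h2 h1, Nat.gcd_ne_zero_right hn⟩
    · rintro ⟨h1, _⟩
      exact ⟨⟨h1.trans (Nat.gcd_dvd_right _ _), hn⟩, h1.trans (Nat.gcd_dvd_left _ _)⟩
  rw [h, Nat.sum_totient]

theorem sivaramakrishnan_identity (m n t n₁ : ℕ) (hm : 0 < m) (hn : 0 < n) (ht : 0 < t)
    (hmt : m ∣ t) (hnt : n ∣ t)
    (hd : n₁ ∣ n) (hc : Nat.gcd n₁ m = 1)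
    (hmax : ∀ d, d ∣ n → Nat.gcd d m = 1 → d ≤ n₁) :
    (∑ a ∈ (Finset.Icc 1 t).filter (fun a => Nat.gcd a m = 1), (Nat.gcd (a - 1) n : ℚ))
      = (t * m.totient * n.divisors.card : ℚ) / m *
        ∏ p ∈ n₁.primeFactors,
          (1 - (n₁.factorization p : ℚ) / ((n₁.factorization p + 1) * p)) := by
  classical
  have hn₁pos : 0 < n₁ := Nat.pos_of_dvd_of_pos hd hn
  obtain ⟨n₂, hn12⟩ := hd
  have hn₂pos : 0 < n₂ := by
    rcases Nat.eq_zero_or_pos n₂ with h | h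
    · rw [hn12, h, mul_zero] at hn; omega
    · exact h
  have hcnm : Nat.Coprime n₁ m := hc
  have hn₂m : ∀ p : ℕ, p.Prime → p ∣ n₂ → p ∣ m := by
    intro p hp hpn₂
    by_contra hpm
    have hco : Nat.Coprime (n₁ * p) m :=
      Nat.Coprime.mul hcnm ((Nat.Prime.coprime_iff_not_dvd hp).mpr hpm)
    have hdvd : n₁ * p ∣ n := by rw [hn12]; exact mul_dvd_mul_left n₁ hpn₂
    have hle := hmax _ hdvd hco
    have := hp.two_le
    nlinarith
  have hco12 : Nat.Coprime n₁ n₂ := by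
    apply Nat.coprime_of_dvd
    intro k hk h1 h2
    have hkg := Nat.dvd_gcd h1 (hn₂m k hk h2)
    rw [hcnm] at hkg
    exact absurd (Nat.dvd_one.mp hkg) hk.ne_one
  -- Step 1 : expand gcd as divisor sum, swap sums
  have step1 : (∑ a ∈ (Finset.Icc 1 t).filter (fun a => Nat.gcd a m = 1), (Nat.gcd (a - 1) n : ℚ))
      = ∑ d ∈ n.divisors, (((Finset.Icc 1 t).filter
          (fun a => Nat.gcd a m = 1 ∧ d ∣ (a-1))).card : ℚ) * d.totient := by
    have h1 : ∀ a ∈ (Finset.Icc 1 t).filter (fun a => Nat.gcd a m = 1),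
        (Nat.gcd (a - 1) n : ℚ) = ∑ d ∈ n.divisors, if d ∣ (a-1) then (d.totient : ℚ) else 0 := by
      intro a _
      rw [← gcd_sum n (a-1) hn.ne', Nat.cast_sum, Finset.sum_filter]
    rw [Finset.sum_congr rfl h1, Finset.sum_comm]
    refine Finset.sum_congr rfl fun d hdd => ?_
    rw [← Finset.sum_filter, Finset.filter_filter, Finset.sum_const, nsmul_eq_mul]
  rw [step1, hn12, sum_div_reindex hn₁pos.ne' hn₂pos.ne' hco12]
  -- Step 3 : evaluate each term
  have step3 : ∀ d₁ ∈ n₁.divisors, ∀ d₂ ∈ n₂.divisors,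
      (((Finset.Icc 1 t).filter (fun a => Nat.gcd a m = 1 ∧ (d₁*d₂) ∣ (a-1))).card : ℚ)
        * ((d₁*d₂ : ℕ).totient : ℚ)
      = ((t : ℚ) * m.totient / m) * (d₁.totient / d₁) := by
    intro d₁ hd₁ d₂ hd₂
    rw [Nat.mem_divisors] at hd₁ hd₂
    have hd₁n₁ := hd₁.1
    have hd₂n₂ := hd₂.1
    have hd₁pos : 0 < d₁ := Nat.pos_of_dvd_of_pos hd₁n₁ hn₁pos
    have hd₂pos : 0 < d₂ := Nat.pos_of_dvd_of_pos hd₂n₂ hn₂pos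
    set S := m.primeFactors.filter (fun p => p ∣ d₂) with hS
    set m₁ := ∏ p ∈ S, p ^ m.factorization p with hm₁
    set m₂ := ∏ p ∈ m.primeFactors.filter (fun p => ¬ p ∣ d₂), p ^ m.factorization p with hm₂
    have hm₁m₂ : m₁ * m₂ = m := by
      rw [hm₁, hm₂, hS, Finset.prod_filter_mul_prod_filter_not]
      rw [← Nat.support_factorization]
      exact Nat.factorization_prod_pow_eq_self hm.ne'
    have hm₁pos : 0 < m₁ :=
      Finset.prod_pos fun p hp => pow_pos (Nat.pos_of_mem_primeFactors (Finset.mem_filter.mp hp).1) _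
    have hm₂pos : 0 < m₂ :=
      Finset.prod_pos fun p hp => pow_pos (Nat.pos_of_mem_primeFactors (Finset.mem_filter.mp hp).1) _
    have hm₂m : m₂ ∣ m := Dvd.intro_left m₁ hm₁m₂
    have hcd₂m₂ : Nat.Coprime d₂ m₂ := by
      rw [hm₂]
      apply Nat.Coprime.prod_right
      intro p hp
      rw [Finset.mem_filter] at hp
      exact Nat.Coprime.pow_right _
        (((Nat.Prime.coprime_iff_not_dvd (Nat.prime_of_mem_primeFactors hp.1)).mpr hp.2).symm)
    have hcd₁m₂ : Nat.Coprime d₁ m₂ :=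
      Nat.Coprime.coprime_dvd_right hm₂m (Nat.Coprime.coprime_dvd_left hd₁n₁ hcnm)
    have hcdm₂ : Nat.Coprime (d₁*d₂) m₂ := Nat.Coprime.mul hcd₁m₂ hcd₂m₂
    have hSd : ∀ p : ℕ, p.Prime → p ∣ m₁ → p ∣ d₂ := by
      intro p hp hpm₁
      rw [hm₁] at hpm₁
      obtain ⟨q, hq, hpq⟩ := (Prime.dvd_finset_prod_iff hp.prime _).mp hpm₁
      rw [hS, Finset.mem_filter] at hq
      have hpq' : p = q := (Nat.prime_dvd_prime_iff_eq hp
        (Nat.prime_of_mem_primeFactors hq.1)).mp (hp.dvd_of_dvd_pow hpq)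
      exact hpq' ▸ hq.2
    have hprim : ∀ p : ℕ, p.Prime → p ∣ m₁ → p ∣ d₁*d₂ :=
      fun p hp h => Dvd.dvd.mul_left (hSd p hp h) d₁
    have hdm₂t : (d₁*d₂) * m₂ ∣ t :=
      Nat.Coprime.mul_dvd_of_dvd_of_dvd hcdm₂
        ((mul_dvd_mul hd₁n₁ hd₂n₂).trans (hn12 ▸ hnt)) (hm₂m.trans hmt)
    have hkey := key_count t (d₁*d₂) m₁ m₂ (by positivity) hm₂pos hcdm₂ hprim hdm₂t
    rw [hm₁m₂] at hkey
    rw [hkey]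
    -- the coprime-part identity : φ(d₂)/d₂ * φ(m₂)/m₂ = φ(m)/m
    have hm₁ne : m₁ ≠ 0 := hm₁pos.ne'
    have hpf : d₂.primeFactors = m₁.primeFactors := by
      ext p
      simp only [Nat.mem_primeFactors]
      constructor
      · rintro ⟨hp, hpd₂, _⟩
        refine ⟨hp, ?_, hm₁ne⟩
        have hpm : p ∣ m := hn₂m p hp (hpd₂.trans hd₂n₂)
        have hpS : p ∈ S := by
          rw [hS, Finset.mem_filter]
          exact ⟨Nat.mem_primeFactors.mpr ⟨hp, hpm, hm.ne'⟩, hpd₂⟩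
        have hfp : m.factorization p ≠ 0 :=
          (Nat.Prime.factorization_pos_of_dvd hp hm.ne' hpm).ne'
        exact (dvd_pow_self p hfp).trans (Finset.dvd_prod_of_mem _ hpS)
      · rintro ⟨hp, hpm₁, _⟩
        exact ⟨hp, hSd p hp hpm₁, hd₂pos.ne'⟩
    have hcm₁m₂ : Nat.Coprime m₁ m₂ := by
      rw [hm₁, hm₂]
      apply Nat.Coprime.prod_left
      intro p hp
      apply Nat.Coprime.prod_right
      intro q hq
      rw [hS, Finset.mem_filter] at hp
      rw [Finset.mem_filter] at hq
      have hpq : p ≠ q := fun h => hq.2 (h ▸ hp.2)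
      exact Nat.Coprime.pow _ _ ((Nat.coprime_primes
        (Nat.prime_of_mem_primeFactors hp.1) (Nat.prime_of_mem_primeFactors hq.1)).mpr hpq)
    have hd₂Q : (d₂ : ℚ) ≠ 0 := Nat.cast_ne_zero.mpr hd₂pos.ne'
    have hm₁Q : (m₁ : ℚ) ≠ 0 := Nat.cast_ne_zero.mpr hm₁pos.ne'
    have hm₂Q : (m₂ : ℚ) ≠ 0 := Nat.cast_ne_zero.mpr hm₂pos.ne'
    have hmQ : (m : ℚ) ≠ 0 := Nat.cast_ne_zero.mpr hm.ne'
    have hd₁Q : (d₁ : ℚ) ≠ 0 := Nat.cast_ne_zero.mpr hd₁pos.ne'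
    have hC1 : (d₂.totient : ℚ)/d₂ = (m₁.totient : ℚ)/m₁ := by
      rw [Nat.totient_eq_mul_prod_factors, Nat.totient_eq_mul_prod_factors, hpf]
      field_simp
    have hC : ((d₂.totient : ℚ)/d₂) * ((m₂.totient : ℚ)/m₂) = (m.totient : ℚ)/m := by
      rw [hC1, ← hm₁m₂, Nat.totient_mul hcm₁m₂, Nat.cast_mul, Nat.cast_mul, div_mul_div_comm]
    have hcd : Nat.Coprime d₁ d₂ := (hco12.coprime_dvd_left hd₁n₁).coprime_dvd_right hd₂n₂
    rw [Nat.cast_mul, Nat.cast_div hdm₂t (by positivity), Nat.totient_mul hcd]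
    calc (t : ℚ) / ((d₁*d₂)*m₂ : ℕ) * (m₂.totient : ℚ) * ((d₁.totient * d₂.totient : ℕ) : ℚ)
        = ((t : ℚ) * ((d₁.totient : ℚ)/d₁)) * (((d₂.totient : ℚ)/d₂) * ((m₂.totient : ℚ)/m₂)) := by
          push_cast
          field_simp
      _ = ((t : ℚ) * ((d₁.totient : ℚ)/d₁)) * ((m.totient : ℚ)/m) := by rw [hC]
      _ = ((t : ℚ) * m.totient / m) * (d₁.totient / d₁) := by ring
  rw [Finset.sum_congr rfl fun d₁ hd₁ => Finset.sum_congr rfl fun d₂ hd₂ => step3 d₁ hd₁ d₂ hd₂]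
  -- Step 4 : finish the summation
  have step4 : (∑ d₁ ∈ n₁.divisors, ∑ _d₂ ∈ n₂.divisors,
        ((t : ℚ) * m.totient / m) * ((d₁.totient : ℚ) / d₁))
      = ((t : ℚ) * m.totient / m) * n₂.divisors.card
          * ∑ d₁ ∈ n₁.divisors, ((d₁.totient : ℚ)/d₁) := by
    rw [Finset.mul_sum]
    refine Finset.sum_congr rfl fun d₁ _ => ?_
    rw [Finset.sum_const, nsmul_eq_mul]
    ring
  rw [step4, sum_totient_div n₁ hn₁pos]
  have hτ : (((n₁*n₂).divisors.card : ℕ) : ℚ) = (n₁.divisors.card : ℚ) * n₂.divisors.card := by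
    rw [Nat.Coprime.card_divisors_mul hco12]
    push_cast
    ring
  have hτ₁ : ((n₁.divisors.card : ℕ) : ℚ)
      = ∏ p ∈ n₁.primeFactors, ((n₁.factorization p : ℚ) + 1) := by
    rw [Nat.card_divisors hn₁pos.ne']
    push_cast
    rfl
  have hprod : ∏ p ∈ n₁.primeFactors, (1 + (n₁.factorization p : ℚ) * (1 - (p:ℚ)⁻¹))
      = (n₁.divisors.card : ℚ)
          * ∏ p ∈ n₁.primeFactors,
              (1 - (n₁.factorization p : ℚ) / ((n₁.factorization p + 1) * p)) := by
    rw [hτ₁, ← Finset.prod_mul_distrib]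
    refine Finset.prod_congr rfl fun p hp => ?_
    have hp' := Nat.prime_of_mem_primeFactors hp
    have hppos : (p:ℚ) ≠ 0 := Nat.cast_ne_zero.mpr hp'.pos.ne'
    have hν : ((n₁.factorization p : ℚ) + 1) ≠ 0 := by positivity
    field_simp
    ring
  rw [hprod, hτ]
  ring
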